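/- Let m > 0, b ∈ (0,1), q₀ > 0, and let a₊, a₋ ∈ ℝ with a₋ = 1 − a₊ and a₊ > 0. Define the inverse demand P(q) = m − m·a₋·(q/q₀)^{−b} − m·a₊·(q/q₀)^{b} for q > 0, and set a_{1,−} = (1−b)·a₋ and a_{1,+} = (1+b)·a₊. Let c ∈ ℝ satisfy (1 − c/m)² ≥ 4·a_{1,−}·a_{1,+}, and define x = (1 − c/m + √((1 − c/m)² − 4·a_{1,−}·a_{1,+})) / (2·a_{1,+}). If x > 0, then q = q₀·x^{1/b} satisfies the monopolist's first-order condition P(q) + q·P′(q) = c. -/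

import Mathlib

/-- **Closed-form solution of the first-order condition for the quadratically tractable
demand form** `P(q) = m - m·a₋·(q/q₀)^{-b} - m·a₊·(q/q₀)^{b}` with `a₋ = 1 - a₊`:
if `(1 - c/m)² ≥ 4·a₁₋·a₁₊` where `a₁₋ = (1-b)a₋`, `a₁₊ = (1+b)a₊`, and the quadratic-formula
root `x = (1 - c/m + √((1-c/m)² - 4a₁₋a₁₊))/(2a₁₊)` is positive, then `q = q₀·x^{1/b}`
satisfies `P(q) + q·P'(q) = c`. -/
theorem stmt9 (m b q₀ ap an c : ℝ) (hm : 0 < m) (hb0 : 0 < b) (hb1 : b < 1)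
    (hq₀ : 0 < q₀) (hap : 0 < ap) (han : an = 1 - ap)
    (a1n a1p : ℝ) (ha1n : a1n = (1 - b) * an) (ha1p : a1p = (1 + b) * ap)
    (hdisc : (1 - c / m) ^ 2 ≥ 4 * a1n * a1p)
    (x : ℝ) (hx : x = (1 - c / m + Real.sqrt ((1 - c / m) ^ 2 - 4 * a1n * a1p)) / (2 * a1p))
    (hxpos : 0 < x)
    (q : ℝ) (hq : q = q₀ * x ^ ((1 : ℝ) / b)) :
    (fun q => m - m * an * (q / q₀) ^ (-b) - m * ap * (q / q₀) ^ b) q +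
      q * deriv (fun q => m - m * an * (q / q₀) ^ (-b) - m * ap * (q / q₀) ^ b) q = c := by
  have hbne : b ≠ 0 := ne_of_gt hb0
  have ha1pp : 0 < a1p := by rw [ha1p]; positivity
  have hxb : x ^ ((1:ℝ)/b) > 0 := Real.rpow_pos_of_pos hxpos _
  have hqpos : 0 < q := by rw [hq]; positivity
  set u := q / q₀ with hu
  have hupos : 0 < u := div_pos hqpos hq₀
  have huq : u = x ^ ((1:ℝ)/b) := by
    rw [hu, hq, mul_comm, mul_div_assoc, div_self (ne_of_gt hq₀), mul_one]
  -- u ^ b = x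
  have hub : u ^ b = x := by
    rw [huq, ← Real.rpow_mul hxpos.le, one_div, inv_mul_cancel₀ hbne, Real.rpow_one]
  have hubn : u ^ (-b) = x⁻¹ := by
    rw [Real.rpow_neg hupos.le, hub]
  -- derivative
  have hder : HasDerivAt (fun q : ℝ => m - m * an * (q / q₀) ^ (-b) - m * ap * (q / q₀) ^ b)
      (-(m * an * (1 / q₀ * (-b) * u ^ (-b - 1))) - m * ap * (1 / q₀ * b * u ^ (b - 1))) q := by
    have hid : HasDerivAt (fun q : ℝ => q / q₀) (1 / q₀) q := by
      simpa using (hasDerivAt_id q).div_const q₀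
    have h1 : HasDerivAt (fun q : ℝ => (q / q₀) ^ (-b)) (1 / q₀ * (-b) * u ^ (-b - 1)) q :=
      hid.rpow_const (Or.inl (ne_of_gt hupos))
    have h2 : HasDerivAt (fun q : ℝ => (q / q₀) ^ b) (1 / q₀ * b * u ^ (b - 1)) q :=
      hid.rpow_const (Or.inl (ne_of_gt hupos))
    have := ((hasDerivAt_const q m).sub (h1.const_mul (m * an))).sub (h2.const_mul (m * ap))
    refine this.congr_deriv ?_; ring
  rw [hder.deriv]
  have hq_eq : q = u * q₀ := by rw [hu, div_mul_cancel₀ q (ne_of_gt hq₀)]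
  have hmul1 : q * u ^ (-b - 1) * (1 / q₀) = u ^ (-b) := by
    rw [hq_eq, show -b = 1 + (-b - 1) by ring, Real.rpow_add hupos, Real.rpow_one]
    field_simp; ring
  have hmul2 : q * u ^ (b - 1) * (1 / q₀) = u ^ b := by
    rw [hq_eq, show b = 1 + (b - 1) by ring, Real.rpow_add hupos, Real.rpow_one]
    field_simp; ring
  -- quadratic identity
  have hs : Real.sqrt ((1 - c / m) ^ 2 - 4 * a1n * a1p) ^ 2
      = (1 - c / m) ^ 2 - 4 * a1n * a1p := Real.sq_sqrt (by linarith)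
  have hquad : a1p * x ^ 2 - (1 - c / m) * x + a1n = 0 := by
    rw [hx]
    set s := Real.sqrt ((1 - c / m) ^ 2 - 4 * a1n * a1p)
    set A := 1 - c / m
    have h2p : (2 * a1p) ≠ 0 := by positivity
    field_simp
    nlinarith [hs]
  have hxne : x ≠ 0 := ne_of_gt hxpos
  have hmne : m ≠ 0 := ne_of_gt hm
  have hcm : m * (c / m) = c := by field_simp
  have hquad' : m * a1p * x ^ 2 - (m - c) * x + m * a1n = 0 := by
    linear_combination m * hquad - x * hcm
  have hxinv : x⁻¹ * x = 1 := inv_mul_cancel₀ hxne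
  have hthis : m - m * a1n * x⁻¹ - m * a1p * x = c := by
    linear_combination (-x⁻¹) * hquad' + (m * a1p * x - (m - c)) * hxinv
  rw [ha1n, ha1p] at hthis
  have hfin : m - m * an * x⁻¹ - m * ap * x
      + (m * an * (b * x⁻¹) - m * ap * (b * x)) = c := by linear_combination hthis
  calc (fun q => m - m * an * (q / q₀) ^ (-b) - m * ap * (q / q₀) ^ b) q +
      q * (-(m * an * (1 / q₀ * (-b) * u ^ (-b - 1))) - m * ap * (1 / q₀ * b * u ^ (b - 1)))
      = m - m * an * u ^ (-b) - m * ap * u ^ b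
        + (m * an * (b * (q * u ^ (-b-1) * (1/q₀))) - m * ap * (b * (q * u ^ (b-1) * (1/q₀)))) := by
        simp only [← hu]; ring
    _ = c := by rw [hmul1, hmul2, hubn, hub]; exact hfin
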